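/- Both 0·ω_T and 1·ω_T (the Thue–Morse sequence with one symbol prepended) are strongly almost periodic. -/

import Mathlib

/-- The factor of `ω` starting at `i` of length `n`. -/
def seg {α : Type*} (ω : ℕ → α) (i n : ℕ) : List α :=
  (List.range n).map (fun k => ω (i + k))

/-- `x` occurs in `ω` at position `i`. -/
def OccursAt {α : Type*} (ω : ℕ → α) (x : List α) (i : ℕ) : Prop :=
  seg ω i x.length = x

/-- Strongly almost periodic: every factor occurs in every sufficiently long factor. -/
def SAP {α : Type*} (ω : ℕ → α) : Prop :=
  ∀ x : List α, (∃ i, OccursAt ω x i) →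
    ∃ l, ∀ j, ∃ i, j ≤ i ∧ i + x.length ≤ j + l ∧ OccursAt ω x i

/-- Almost periodic: every factor occurring infinitely often occurs in every
sufficiently long factor. -/
def AP {α : Type*} (ω : ℕ → α) : Prop :=
  ∀ x : List α, {i | OccursAt ω x i}.Infinite →
    ∃ l, ∀ j, ∃ i, j ≤ i ∧ i + x.length ≤ j + l ∧ OccursAt ω x i

/-- Eventually strongly almost periodic: some suffix is strongly almost periodic. -/
def EAP {α : Type*} (ω : ℕ → α) : Prop :=
  ∃ n, SAP (fun i => ω (n + i))

/-- Prefixes of the Thue--Morse sequence: `a_0 = 0`, `a_{n+1} = a_n · (complement of a_n)`. -/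
def tmPrefix : ℕ → List Bool
  | 0 => [false]
  | n + 1 => tmPrefix n ++ (tmPrefix n).map (fun b => !b)

/-- The Thue--Morse sequence, the pointwise limit of the prefixes `tmPrefix n`. -/
def thueMorse (i : ℕ) : Bool := (tmPrefix (i + 1)).getD i false

/-- The sequence `b·ω` obtained by prepending the symbol `b` to `ω`. -/
def prepend {α : Type*} (b : α) (ω : ℕ → α) : ℕ → α
  | 0 => b
  | n + 1 => ω n

lemma length_tmPrefix (m : ℕ) : (tmPrefix m).length = 2 ^ m := by
  induction m with
  | zero => rfl
  | succ m ih => simp [tmPrefix, ih, pow_succ]; ring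

lemma tmPrefix_succ_bind (m : ℕ) :
    tmPrefix (m + 1) = (tmPrefix m).flatMap (fun b => [b, !b]) := by
  induction m with
  | zero => rfl
  | succ m ih =>
    show (tmPrefix (m+1)) ++ (tmPrefix (m+1)).map (fun b => !b)
        = (tmPrefix m ++ (tmPrefix m).map (fun b => !b)).flatMap _
    simp only [ih, List.flatMap_append, List.map_flatMap, List.flatMap_map, Function.comp]
    congr 1

lemma bind_getD_even (l : List Bool) (i : ℕ) (h : i < l.length) :
    (l.flatMap (fun b => [b, !b])).getD (2 * i) false = l.getD i false := by
  induction l generalizing i with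
  | nil => simp at h
  | cons a t ih =>
    cases i with
    | zero => rfl
    | succ i =>
      have : 2 * (i + 1) = (2 * i) + 1 + 1 := by ring
      rw [this]
      show (t.flatMap (fun b => [b, !b])).getD (2 * i) false = t.getD i false
      exact ih i (by simpa using h)

lemma bind_getD_odd (l : List Bool) (i : ℕ) (h : i < l.length) :
    (l.flatMap (fun b => [b, !b])).getD (2 * i + 1) false = !(l.getD i false) := by
  induction l generalizing i with
  | nil => simp at h
  | cons a t ih =>
    cases i with
    | zero => rfl
    | succ i =>
      have : 2 * (i + 1) + 1 = (2 * i + 1) + 1 + 1 := by ring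
      rw [this]
      show (t.flatMap (fun b => [b, !b])).getD (2 * i + 1) false = !(t.getD i false)
      exact ih i (by simpa using h)

lemma lt_two_pow_succ (i : ℕ) : i < 2 ^ (i + 1) := by
  have h := (Nat.lt_two_pow_self (n := i))
  have : 2 ^ (i + 1) = 2 * 2 ^ i := by ring
  omega

lemma tmPrefix_prefix_succ (m : ℕ) : tmPrefix m <+: tmPrefix (m + 1) :=
  ⟨(tmPrefix m).map (fun b => !b), rfl⟩

lemma tmPrefix_prefix {k m : ℕ} (h : k ≤ m) : tmPrefix k <+: tmPrefix m := by
  induction m with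
  | zero => simp_all
  | succ m ih =>
    rcases Nat.lt_or_ge k (m+1) with h' | h'
    · exact (ih (by omega)).trans (tmPrefix_prefix_succ m)
    · have : k = m + 1 := by omega
      subst this; exact List.prefix_rfl

lemma getD_of_prefix {l l' : List Bool} (h : l <+: l') {i : ℕ} (hi : i < l.length) :
    l'.getD i false = l.getD i false := by
  obtain ⟨t, rfl⟩ := h
  rw [List.getD_append _ _ _ _ hi]

lemma thueMorse_eq {i m : ℕ} (h : i < 2 ^ m) :
    thueMorse i = (tmPrefix m).getD i false := by
  rcases Nat.le_total (i + 1) m with h' | h'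
  · exact (getD_of_prefix (tmPrefix_prefix h')
      (by rw [length_tmPrefix]; exact lt_two_pow_succ i)).symm
  · exact getD_of_prefix (tmPrefix_prefix h') (by rwa [length_tmPrefix])

lemma thueMorse_zero : thueMorse 0 = false := rfl

lemma thueMorse_two_mul (i : ℕ) : thueMorse (2 * i) = thueMorse i := by
  have h1 : i < 2 ^ (i + 1) := lt_two_pow_succ i
  have h2 : 2 * i < 2 ^ (i + 2) := by
    have := (Nat.lt_two_pow_self (n := i))
    rw [pow_succ, pow_succ]; omega
  rw [thueMorse_eq h2, thueMorse_eq h1, tmPrefix_succ_bind,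
    bind_getD_even _ _ (by rw [length_tmPrefix]; exact h1)]

lemma thueMorse_two_mul_add_one (i : ℕ) : thueMorse (2 * i + 1) = !(thueMorse i) := by
  have h1 : i < 2 ^ (i + 1) := lt_two_pow_succ i
  have h2 : 2 * i + 1 < 2 ^ (i + 2) := by
    have := (Nat.lt_two_pow_self (n := i))
    rw [pow_succ, pow_succ]; omega
  rw [thueMorse_eq h2, thueMorse_eq h1, tmPrefix_succ_bind,
    bind_getD_odd _ _ (by rw [length_tmPrefix]; exact h1)]

/-- Self-similarity: within block `t` at scale `2^m`, the sequence is
`thueMorse t` XOR the beginning of the sequence. -/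
lemma thueMorse_key : ∀ m t k, k < 2 ^ m →
    thueMorse (2 ^ m * t + k) = xor (thueMorse t) (thueMorse k) := by
  intro m
  induction m with
  | zero =>
    intro t k hk
    interval_cases k
    simp [thueMorse_zero]
  | succ m ih =>
    intro t k hk
    rcases Nat.even_or_odd k with ⟨k', rfl⟩ | ⟨k', rfl⟩
    · have hk' : k' < 2 ^ m := by rw [pow_succ] at hk; omega
      have h1 : 2 ^ (m + 1) * t + (k' + k') = 2 * (2 ^ m * t + k') := by
        rw [pow_succ]; ring
      have h2 : k' + k' = 2 * k' := by ring
      rw [h1, thueMorse_two_mul, ih t k' hk', h2, thueMorse_two_mul]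
    · have hk' : k' < 2 ^ m := by rw [pow_succ] at hk; omega
      have h1 : 2 ^ (m + 1) * t + (2 * k' + 1) = 2 * (2 ^ m * t + k') + 1 := by
        rw [pow_succ]; ring
      rw [h1, thueMorse_two_mul_add_one, ih t k' hk', thueMorse_two_mul_add_one]
      cases thueMorse t <;> simp

/-- Every letter occurs in every window of length 3. -/
lemma letter_in (b : Bool) (j : ℕ) : ∃ t, j ≤ t ∧ t ≤ j + 2 ∧ thueMorse t = b := by
  set n := (j + 1) / 2 with hn
  have h2n : j ≤ 2 * n ∧ 2 * n ≤ j + 1 := by omega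
  by_cases h : thueMorse n = b
  · exact ⟨2 * n, h2n.1, by omega, by rw [thueMorse_two_mul]; exact h⟩
  · refine ⟨2 * n + 1, by omega, by omega, ?_⟩
    rw [thueMorse_two_mul_add_one]
    cases b <;> cases hb : thueMorse n <;> simp_all

/-- Every pair of adjacent letters of the form `(b, !b)` occurs in every window. -/
lemma neq_pair_in (b : Bool) (j : ℕ) :
    ∃ t, j ≤ t ∧ t + 2 ≤ j + 8 ∧ thueMorse t = b ∧ thueMorse (t + 1) = !b := by
  obtain ⟨n, hn1, hn2, hn3⟩ := letter_in b ((j + 1) / 2)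
  refine ⟨2 * n, by omega, by omega, ?_, ?_⟩
  · rw [thueMorse_two_mul]; exact hn3
  · rw [thueMorse_two_mul_add_one, hn3]

/-- Every pair of adjacent letters of the form `(b, b)` occurs in every window. -/
lemma eq_pair_in (b : Bool) (j : ℕ) :
    ∃ t, j ≤ t ∧ t + 2 ≤ j + 16 ∧ thueMorse t = b ∧ thueMorse (t + 1) = b := by
  obtain ⟨n, hn1, hn2, hn3, hn4⟩ := neq_pair_in (!b) ((j + 1) / 2)
  refine ⟨2 * n + 1, by omega, by omega, ?_, ?_⟩
  · rw [thueMorse_two_mul_add_one, hn3, Bool.not_not]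
  · have : 2 * n + 1 + 1 = 2 * (n + 1) := by ring
    rw [this, thueMorse_two_mul, hn4, Bool.not_not]

/-- Every pair of adjacent letters occurs in every window of length 16. -/
lemma pair_in (a b : Bool) (j : ℕ) :
    ∃ t, j ≤ t ∧ t + 2 ≤ j + 16 ∧ thueMorse t = a ∧ thueMorse (t + 1) = b := by
  by_cases h : b = !a
  · subst h
    obtain ⟨t, h1, h2, h3, h4⟩ := neq_pair_in a j
    exact ⟨t, h1, by omega, h3, h4⟩
  · have : b = a := by cases a <;> cases b <;> simp_all
    subst this
    exact eq_pair_in b j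

lemma occursAt_iff {α : Type*} (ω : ℕ → α) (x : List α) (i : ℕ) :
    OccursAt ω x i ↔ ∀ k (h : k < x.length), ω (i + k) = x[k] := by
  constructor
  · intro h k hk
    rw [List.getElem_of_eq h.symm hk]
    simp [seg]
  · intro h
    apply List.ext_getElem
    · simp [seg]
    · intro k h1 h2
      simpa [seg] using h k h2

/-- The main theorem: the Thue–Morse sequence is strongly almost periodic. -/
theorem sap_thueMorse : SAP thueMorse := by
  intro x ⟨p, hp⟩
  rcases Nat.eq_zero_or_pos x.length with h0 | h0
  · exact ⟨0, fun j => ⟨j, le_rfl, by omega, by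
      rw [occursAt_iff]; intro k hk; omega⟩⟩
  set n := x.length with hnx
  set M := 2 ^ n with hM
  have hnM : n ≤ M := ((Nat.lt_two_pow_self (n := n))).le
  have hMpos : 0 < M := by positivity
  rw [occursAt_iff] at hp
  set q := p / M with hq
  set r := p % M with hr
  have hqr : p = M * q + r := (Nat.div_add_mod p M).symm ▸ by omega
  have hrM : r < M := Nat.mod_lt _ hMpos
  refine ⟨19 * M, fun j => ?_⟩
  obtain ⟨t, ht1, ht2, ht3, ht4⟩ := pair_in (thueMorse q) (thueMorse (q + 1)) (j / M + 1)
  refine ⟨M * t + r, ?_, ?_, ?_⟩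
  · have : M * (j / M) + M ≤ M * t := by
      calc M * (j / M) + M = M * (j / M + 1) := by ring
      _ ≤ M * t := Nat.mul_le_mul_left M ht1
    have := Nat.div_add_mod j M
    have := Nat.mod_lt j hMpos
    omega
  · have : M * t ≤ M * (j / M + 15) := Nat.mul_le_mul_left M (by omega)
    have h2 : M * (j / M) ≤ j := by
      rw [Nat.mul_comm]; exact Nat.div_mul_le_self j M
    have h3 : M * (j / M + 15) = M * (j / M) + 15 * M := by ring
    omega
  · rw [occursAt_iff]
    intro k hk
    rw [← hp k hk]
    rcases Nat.lt_or_ge (r + k) M with hc | hc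
    · have e1 : M * t + r + k = M * t + (r + k) := by omega
      have e2 : p + k = M * q + (r + k) := by omega
      rw [e1, e2, thueMorse_key n t (r + k) hc, thueMorse_key n q (r + k) hc, ht3]
    · have hs : r + k - M < M := by omega
      have e1 : M * t + r + k = M * (t + 1) + (r + k - M) := by
        rw [Nat.mul_succ]; omega
      have e2 : p + k = M * (q + 1) + (r + k - M) := by
        rw [Nat.mul_succ]; omega
      rw [e1, e2, thueMorse_key n (t + 1) _ hs, thueMorse_key n (q + 1) _ hs, ht4]

lemma occ_shift {b : Bool} {x : List Bool} {i : ℕ} (h : OccursAt thueMorse x i) :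
    OccursAt (prepend b thueMorse) x (i + 1) := by
  rw [occursAt_iff] at h ⊢
  intro k hk
  have e : i + 1 + k = (i + k) + 1 := by omega
  rw [e]
  exact h k hk

lemma occ_unshift {b : Bool} {x : List Bool} {i : ℕ}
    (h : OccursAt (prepend b thueMorse) x (i + 1)) : OccursAt thueMorse x i := by
  rw [occursAt_iff] at h ⊢
  intro k hk
  have e : i + 1 + k = (i + k) + 1 := by omega
  have := h k hk
  rwa [e] at this

lemma occ_zero {b : Bool} {x : List Bool}
    (h : OccursAt (prepend b thueMorse) x 0) : ∃ i, OccursAt thueMorse x i := by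
  rcases Nat.eq_zero_or_pos x.length with h0 | h0
  · exact ⟨0, by rw [occursAt_iff]; intro k hk; omega⟩
  rw [occursAt_iff] at h
  set n := x.length with hnx
  set M := 2 ^ n with hM
  have hnM : n ≤ M := ((Nat.lt_two_pow_self (n := n))).le
  have hMpos : 0 < M := by positivity
  have hb : x[0] = b := by rw [← h 0 h0]; rfl
  -- find t ≥ 1 with thueMorse t = false and thueMorse (t-1) = xor b (thueMorse (M-1))
  obtain ⟨t', ht1, ht2, ht3, ht4⟩ :=
    pair_in (xor b (thueMorse (M - 1))) false 0
  refine ⟨M * (t' + 1) - 1, ?_⟩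
  rw [occursAt_iff]
  intro k hk
  cases k with
  | zero =>
    have e : M * (t' + 1) - 1 + 0 = M * t' + (M - 1) := by
      rw [Nat.mul_succ]; omega
    rw [e, thueMorse_key n t' (M - 1) (by omega), ht3, hb]
    cases b <;> cases thueMorse (M - 1) <;> rfl
  | succ k =>
    have hkM : k < M := by omega
    have e : M * (t' + 1) - 1 + (k + 1) = M * (t' + 1) + k := by
      rw [Nat.mul_succ]; omega
    rw [e, thueMorse_key n (t' + 1) k hkM, ht4, ← h (k + 1) hk]
    simp [prepend]

theorem sap_prepend (b : Bool) : SAP (prepend b thueMorse) := by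
  intro x ⟨i, hi⟩
  have hx : ∃ i, OccursAt thueMorse x i := by
    cases i with
    | zero => exact occ_zero hi
    | succ i => exact ⟨i, occ_unshift hi⟩
  obtain ⟨l, hl⟩ := sap_thueMorse x hx
  refine ⟨l + 1, fun j => ?_⟩
  obtain ⟨i, h1, h2, h3⟩ := hl j
  exact ⟨i + 1, by omega, by omega, occ_shift h3⟩


/-- Both `0·ω_T` and `1·ω_T` are strongly almost periodic. -/
theorem sap_prepend_thueMorse :
    SAP (prepend false thueMorse) ∧ SAP (prepend true thueMorse) := by
  exact ⟨sap_prepend false, sap_prepend true⟩
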